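/- Define φ(s) = (e^s + e^(L-s))/(1 + e^L) for 0 ≤ s ≤ L with L > 0. Then ∫₀^L φ(s)² ds ≤ 6/5. -/

import Mathlib

lemma eleven_le_exp : (11:ℝ) ≤ Real.exp (12/5) := by
  have h1 : (2.7182818283:ℝ) ^ (12:ℕ) ≤ (Real.exp 1) ^ (12:ℕ) :=
    pow_le_pow_left₀ (by norm_num) Real.exp_one_gt_d9.le 12
  have h2 : Real.exp 1 ^ (12:ℕ) = Real.exp (12/5) ^ (5:ℕ) := by
    rw [← Real.exp_nat_mul, ← Real.exp_nat_mul]; norm_num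
  have h3 : (11:ℝ) ^ (5:ℕ) ≤ Real.exp (12/5) ^ (5:ℕ) := by
    rw [← h2]
    calc (11:ℝ)^(5:ℕ) ≤ (2.7182818283:ℝ) ^ (12:ℕ) := by norm_num
      _ ≤ _ := h1
  exact le_of_pow_le_pow_left₀ (by norm_num) (Real.exp_pos _).le h3

lemma key_ineq (L : ℝ) (hL : 0 < L) :
    10 * L * Real.exp L ≤ Real.exp L ^ 2 + 12 * Real.exp L + 11 := by
  set x := Real.exp L with hx
  have hx1 : 1 < x := by rw [hx]; exact Real.one_lt_exp_iff.mpr hL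
  have hxpos : 0 < x := by linarith
  have hlog : L = Real.log x := by rw [hx, Real.log_exp]
  have h11 : Real.log 11 ≤ 12/5 := by
    rw [Real.log_le_iff_le_exp (by norm_num)]; exact eleven_le_exp
  have hlx : Real.log x ≤ x/11 - 1 + Real.log 11 := by
    have := Real.log_le_sub_one_of_pos (show (0:ℝ) < x/11 by positivity)
    have hsplit : Real.log (x/11) = Real.log x - Real.log 11 := by
      rw [Real.log_div (by linarith) (by norm_num)]
    linarith [hsplit ▸ this]
  have hL' : L ≤ x/11 + 7/5 := by rw [hlog]; linarith
  nlinarith [sq_nonneg (x - 11), mul_le_mul_of_nonneg_right hL' hxpos.le]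

/-- For any `L > 0` and `φ(s) = (e^s + e^(L-s))/(1 + e^L)`, the integral of `φ²`
over `[0, L]` is at most `6/5`. -/
theorem integral_phi_sq_le (L : ℝ) (hL : 0 < L) :
    ∫ s in (0 : ℝ)..L, ((Real.exp s + Real.exp (L - s)) / (1 + Real.exp L)) ^ 2 ≤ 6 / 5 := by
  have hden : (0:ℝ) < (1 + Real.exp L) ^ 2 := by positivity
  set F : ℝ → ℝ := fun s =>
    (Real.exp (2*s) / 2 + 2 * Real.exp L * s - Real.exp (2*L - 2*s) / 2)
      / (1 + Real.exp L) ^ 2 with hF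
  have hderiv : ∀ s ∈ Set.uIcc (0:ℝ) L, HasDerivAt F
      (((Real.exp s + Real.exp (L - s)) / (1 + Real.exp L)) ^ 2) s := by
    intro s _
    have hinner1 : HasDerivAt (fun x : ℝ => 2*x) 2 s := by
      simpa using (hasDerivAt_id s).const_mul 2
    have h1 : HasDerivAt (fun s : ℝ => Real.exp (2*s)) (Real.exp (2*s) * 2) s :=
      (Real.hasDerivAt_exp (2*s)).comp s hinner1
    have h2 : HasDerivAt (fun s : ℝ => Real.exp (2*L - 2*s))
        (Real.exp (2*L - 2*s) * (-2)) s := by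
      have hinner : HasDerivAt (fun s : ℝ => 2*L - 2*s) (-2) s := by
        simpa using hinner1.const_sub (2*L)
      exact (Real.hasDerivAt_exp (2*L - 2*s)).comp s hinner
    have h3 : HasDerivAt (fun s : ℝ => 2 * Real.exp L * s) (2 * Real.exp L) s := by
      simpa using (hasDerivAt_id s).const_mul (2 * Real.exp L)
    have hcomb := (((h1.div_const 2).add h3).sub (h2.div_const 2)).div_const
      ((1 + Real.exp L) ^ 2)
    convert hcomb using 1
    · rfl
    · rfl
    · rfl
    have e1 : Real.exp (2*s) = Real.exp s * Real.exp s := by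
      rw [← Real.exp_add]; ring_nf
    have e2 : Real.exp (2*L - 2*s) = Real.exp (L - s) * Real.exp (L - s) := by
      rw [← Real.exp_add]; ring_nf
    have e3 : Real.exp L = Real.exp s * Real.exp (L - s) := by
      rw [← Real.exp_add]; ring_nf
    rw [div_pow, e1, e2, e3]; ring
  have hcont : ContinuousOn (fun s =>
      ((Real.exp s + Real.exp (L - s)) / (1 + Real.exp L)) ^ 2) (Set.uIcc 0 L) := by
    fun_prop
  have hint := intervalIntegral.integral_eq_sub_of_hasDerivAt hderiv
    (hcont.intervalIntegrable)
  rw [hint]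
  have hFL : F L - F 0 = (Real.exp (2*L) - 1 + 2 * L * Real.exp L) / (1 + Real.exp L) ^ 2 := by
    simp only [hF]
    rw [mul_zero, sub_zero, mul_zero, Real.exp_zero]
    have : 2*L - 2*L = 0 := by ring
    rw [this, Real.exp_zero]
    field_simp
    ring
  rw [hFL, div_le_iff₀ hden]
  have hkey := key_ineq L hL
  have e2L : Real.exp (2*L) = Real.exp L ^ 2 := by
    rw [← Real.exp_nat_mul]; norm_num
  rw [e2L]
  nlinarith [Real.exp_pos L]
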